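/- Let H ∈ ℝ^{n_y×n_x} have full row rank (rank H = n_y), so that HHᵀ is invertible, and set H† = Hᵀ(HHᵀ)⁻¹. Let κ > 0 and let x(1), …, x(T) ∈ ℝ^{n_x} satisfy ‖x(k)‖_∞ ≤ κ for all k. Let γ(1), …, γ(T) belong to the zonotope ⟨c_γ, G_γ⟩ ⊂ ℝ^{n_y} with generators g_γ^{(1)}, …, g_γ^{(ξ_γ)}, and let z(k) = H x(k) + γ(k). Form X⁺ = [x(1) ⋯ x(T)] ∈ ℝ^{n_x×T}, Z⁺ = [z(1) ⋯ z(T)], and C_γ = [c_γ ⋯ c_γ] ∈ ℝ^{n_y×T}. Then X⁺ belongs to the matrix zonotope with center H†(Z⁺ − C_γ) and generator matrices consisting of: (i) the matrices H† g_γ^{(i)} e_jᵀ for i = 1,…,ξ_γ and j = 1,…,T (i.e., H† g_γ^{(i)} placed in column j and zeros elsewhere), and (ii) the matrices κ (I_{n_x} − H† H) e_l e_jᵀ for l = 1,…,n_x and j = 1,…,T, where e_j denotes the j-th standard basis vector of the appropriate dimension. -/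

import Mathlib

open Matrix

/-- The unknown state sequence `X⁺` is contained in the matrix
zonotope with center `H†(Z⁺ − Cγ)` and generators `H† gγ^{(i)} e_jᵀ` and
`κ(I − H†H) e_l e_jᵀ`. -/
theorem stmt_1 {nx ny ξγ T : ℕ}
    (H : Matrix (Fin ny) (Fin nx) ℝ) (hrank : H.rank = ny)
    (κ : ℝ) (hκ : 0 < κ)
    (x : Fin T → Fin nx → ℝ) (hx : ∀ k, ∀ j, |x k j| ≤ κ)
    (cγ : Fin ny → ℝ) (Gγ : Matrix (Fin ny) (Fin ξγ) ℝ)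
    (γ : Fin T → Fin ny → ℝ)
    (hγ : ∀ k, ∃ βγ : Fin ξγ → ℝ, (∀ i, |βγ i| ≤ 1) ∧ γ k = cγ + Gγ.mulVec βγ)
    (z : Fin T → Fin ny → ℝ) (hz : ∀ k, z k = H.mulVec (x k) + γ k)
    (Xp : Matrix (Fin nx) (Fin T) ℝ) (Zp Cγ : Matrix (Fin ny) (Fin T) ℝ)
    (hXp : Xp = Matrix.of fun l k => x k l)
    (hZp : Zp = Matrix.of fun l k => z k l)
    (hCγ : Cγ = Matrix.of fun l _ => cγ l) :
    ∃ β : (Fin ξγ × Fin T) ⊕ (Fin nx × Fin T) → ℝ, (∀ i, |β i| ≤ 1) ∧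
      Xp = (Hᵀ * (H * Hᵀ)⁻¹) * (Zp - Cγ) +
        ∑ i : (Fin ξγ × Fin T) ⊕ (Fin nx × Fin T), β i •
          (Sum.elim
            (fun p : Fin ξγ × Fin T =>
              Matrix.vecMulVec ((Hᵀ * (H * Hᵀ)⁻¹).mulVec (fun l => Gγ l p.1))
                (Pi.single p.2 1))
            (fun p : Fin nx × Fin T =>
              Matrix.vecMulVec
                (κ • ((1 : Matrix (Fin nx) (Fin nx) ℝ) -
                  (Hᵀ * (H * Hᵀ)⁻¹) * H).mulVec (Pi.single p.1 1))
                (Pi.single p.2 1)) i) := by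
  choose βγ hβ1 hβ2 using hγ
  set M : Matrix (Fin nx) (Fin ny) ℝ := Hᵀ * (H * Hᵀ)⁻¹ with hM
  set B : Matrix (Fin ξγ) (Fin T) ℝ := Matrix.of fun i k => βγ k i with hB
  refine ⟨Sum.elim (fun p => -(βγ p.2 p.1)) (fun p => x p.2 p.1 / κ), ?_, ?_⟩
  · rintro (⟨i, k⟩ | ⟨l, k⟩)
    · simpa using hβ1 k i
    · rw [Sum.elim_inr, abs_div, abs_of_pos hκ, div_le_one hκ]
      exact hx k l
  · rw [Fintype.sum_sum_type]
    have hZC : Zp - Cγ = H * Xp + Gγ * B := by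
      subst hZp hCγ hXp
      ext m k
      simp [Matrix.mul_apply, hz k, hβ2 k, Matrix.mulVec, dotProduct, hB]
      ring
    have h1 : (∑ p : Fin ξγ × Fin T, Sum.elim (fun p => -(βγ p.2 p.1))
          (fun p : Fin nx × Fin T => x p.2 p.1 / κ) (Sum.inl p) •
          (Sum.elim
            (fun p : Fin ξγ × Fin T =>
              Matrix.vecMulVec (M.mulVec (fun l => Gγ l p.1))
                (Pi.single p.2 1))
            (fun p : Fin nx × Fin T =>
              Matrix.vecMulVec
                (κ • ((1 : Matrix (Fin nx) (Fin nx) ℝ) - M * H).mulVec (Pi.single p.1 1))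
                (Pi.single p.2 1)) (Sum.inl p))) = -(M * Gγ * B) := by
      ext l k
      rw [Matrix.sum_apply]
      rw [Fintype.sum_prod_type]
      simp only [Sum.elim_inl, Matrix.smul_apply, Matrix.vecMulVec_apply,
        Pi.single_apply, smul_eq_mul, mul_ite, mul_one, mul_zero,
        Finset.sum_ite_eq, Finset.mem_univ, if_true]
      simp only [Matrix.neg_apply, Matrix.mul_apply, Matrix.mulVec, dotProduct,
        Matrix.of_apply, hB]
      rw [← Finset.sum_neg_distrib]
      refine Finset.sum_congr rfl fun i _ => ?_
      rw [Finset.sum_mul, ← Finset.sum_neg_distrib, Finset.mul_sum]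
      exact Finset.sum_congr rfl fun m _ => by ring

    have h2 : (∑ p : Fin nx × Fin T, Sum.elim (fun p : Fin ξγ × Fin T => -(βγ p.2 p.1))
          (fun p : Fin nx × Fin T => x p.2 p.1 / κ) (Sum.inr p) •
          (Sum.elim
            (fun p : Fin ξγ × Fin T =>
              Matrix.vecMulVec (M.mulVec (fun l => Gγ l p.1))
                (Pi.single p.2 1))
            (fun p : Fin nx × Fin T =>
              Matrix.vecMulVec
                (κ • ((1 : Matrix (Fin nx) (Fin nx) ℝ) - M * H).mulVec (Pi.single p.1 1))
                (Pi.single p.2 1)) (Sum.inr p))) = Xp - M * H * Xp := by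
      ext l k
      rw [Matrix.sum_apply]
      rw [Fintype.sum_prod_type]
      simp only [Sum.elim_inr, Matrix.smul_apply, Matrix.vecMulVec_apply,
        Pi.single_apply, smul_eq_mul, Pi.smul_apply, mul_ite, mul_one, mul_zero,
        Finset.sum_ite_eq, Finset.mem_univ, if_true]
      have hκ' : κ ≠ 0 := ne_of_gt hκ
      subst hXp
      simp only [Pi.smul_apply, smul_eq_mul, Matrix.mulVec_single_one, Matrix.col_apply, mul_one,
        Matrix.sub_apply, Matrix.one_apply, Matrix.mul_apply, Matrix.of_apply]
      rw [Finset.sum_congr rfl (fun l' _ => show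
          x k l' / κ * (κ * ((if l = l' then (1:ℝ) else 0) - ∑ m, M l m * H m l'))
          = (if l = l' then x k l' else 0) - (∑ m, M l m * H m l') * x k l' from by
        rw [div_mul_eq_mul_div, mul_div_assoc, mul_div_cancel_left₀ _ hκ']
        rcases eq_or_ne l l' with h | h <;> simp [h] <;> ring)]
      rw [Finset.sum_sub_distrib, Finset.sum_ite_eq, if_pos (Finset.mem_univ l)]
    rw [h1, h2, hZC, Matrix.mul_add, ← Matrix.mul_assoc, ← Matrix.mul_assoc]
    abel
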